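/- Let T be a triangulated category, and let E be an object equipped with a tower ⋯ → f_{n+1}E → f_n E → ⋯ → f_0 E → E such that the cofiber of f_{n+1}E → f_n E is the n-th slice s_n E. If s_{-n}(E) = 0 for all n > 0 and the canonical map hocolim_{n→∞} f_{-n}(E) → E is an isomorphism, then the map f_0(E) → E is an isomorphism. -/

import Mathlib

open CategoryTheory Limits Pretriangulated

/-- Slice filtration convergence: if all negative slices vanish and the homotopy
colimit of the tower `f₀E → f₋₁E → ⋯` maps isomorphically to `E`, then
`f₀E → E` is an isomorphism. -/
theorem stmt11 {T : Type*} [Category T] [Preadditive T] [HasZeroObject T]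
    [HasShift T ℤ] [∀ n : ℤ, (shiftFunctor T n).Additive] [Pretriangulated T]
    [HasCoproductsOfShape ℕ T]
    (E : T) (Fm : ℕ → T) (g : ∀ n : ℕ, Fm n ⟶ Fm (n + 1))
    (Sl : ℕ → T) (p : ∀ n : ℕ, Fm (n + 1) ⟶ Sl n)
    (d : ∀ n : ℕ, Sl n ⟶ (Fm n)⟦(1 : ℤ)⟧)
    (hdist : ∀ n, Triangle.mk (g n) (p n) (d n) ∈ distTriang T)
    (hzero : ∀ n, IsZero (Sl n))
    (e : ∀ n : ℕ, Fm n ⟶ E) (hcompat : ∀ n, e n = g n ≫ e (n + 1))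
    (H : T) (π : (∐ Fm) ⟶ H) (δ : H ⟶ (∐ Fm)⟦(1 : ℤ)⟧)
    (hH : Triangle.mk
        (𝟙 (∐ Fm) - Sigma.desc (fun n => g n ≫ Sigma.ι Fm (n + 1))) π δ
      ∈ distTriang T)
    (h : H ⟶ E) (hfac : ∀ n, Sigma.ι Fm n ≫ π ≫ h = e n)
    (hiso : IsIso h) :
    IsIso (e 0) := by
  classical
  -- each `g n` is an isomorphism, since its cone `Sl n` is zero
  have hg : ∀ n, IsIso (g n) := fun n =>
    ((Triangle.mk (g n) (p n) (d n)).isZero₃_iff_isIso₁ (hdist n)).1 (hzero n)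
  -- the composite isomorphisms `t n : Fm 0 ⟶ Fm n` and their inverses `ti n`
  let t : ∀ n : ℕ, Fm 0 ⟶ Fm n := fun n => Nat.rec (𝟙 _) (fun k tk => tk ≫ g k) n
  let gi : ∀ n : ℕ, Fm (n + 1) ⟶ Fm n := fun n => letI := hg n; inv (g n)
  have hggi : ∀ n, g n ≫ gi n = 𝟙 (Fm n) := fun n => letI := hg n; IsIso.hom_inv_id (g n)
  have hgig : ∀ n, gi n ≫ g n = 𝟙 (Fm (n + 1)) := fun n => letI := hg n; IsIso.inv_hom_id (g n)
  let ti : ∀ n : ℕ, Fm n ⟶ Fm 0 := fun n => Nat.rec (𝟙 _) (fun k tik => gi k ≫ tik) n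
  have hginv : ∀ n, g n ≫ ti (n + 1) = ti n := by
    intro n
    show g n ≫ gi n ≫ ti n = ti n
    rw [← Category.assoc, hggi n, Category.id_comp]
  have htit : ∀ n, ti n ≫ t n = 𝟙 (Fm n) := by
    intro n
    induction n with
    | zero => exact Category.id_comp _
    | succ k ih =>
      show (gi k ≫ ti k) ≫ (t k ≫ g k) = 𝟙 _
      rw [Category.assoc, ← Category.assoc (ti k), ih, Category.id_comp, hgig k]
  have hinv0 : ti 0 = 𝟙 (Fm 0) := rfl
  let s : (∐ Fm) ⟶ (∐ Fm) := Sigma.desc (fun n => g n ≫ Sigma.ι Fm (n + 1))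
  have hιs : ∀ n, Sigma.ι Fm n ≫ s = g n ≫ Sigma.ι Fm (n + 1) := fun n => Sigma.ι_desc _ _
  -- the retraction `u : ∐ Fm ⟶ Fm 0`
  let u : (∐ Fm) ⟶ Fm 0 := Sigma.desc (fun n => ti n)
  have hιu : ∀ n, Sigma.ι Fm n ≫ u = ti n := fun n => Sigma.ι_desc _ _
  have hι0u : Sigma.ι Fm 0 ≫ u = 𝟙 (Fm 0) := by rw [hιu 0, hinv0]
  have hι1s : ∀ n, Sigma.ι Fm n ≫ (𝟙 (∐ Fm) - s)
      = Sigma.ι Fm n - g n ≫ Sigma.ι Fm (n + 1) := by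
    intro n
    rw [Preadditive.comp_sub, Category.comp_id, hιs n]
  have hsu : (𝟙 (∐ Fm) - s) ≫ u = 0 := by
    apply Sigma.hom_ext
    intro n
    rw [comp_zero, ← Category.assoc, hι1s n, Preadditive.sub_comp, hιu n, Category.assoc,
      hιu (n + 1), hginv n, sub_self]
  -- the "partial sums" map `w`
  let w : (∐ Fm) ⟶ (∐ Fm) := Sigma.desc (fun n =>
    ∑ k ∈ Finset.range n, ti n ≫ t k ≫ Sigma.ι Fm k)
  have hιw : ∀ n, Sigma.ι Fm n ≫ w =
      ∑ k ∈ Finset.range n, ti n ≫ t k ≫ Sigma.ι Fm k := fun n => Sigma.ι_desc _ _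
  have hι0w : Sigma.ι Fm 0 ≫ w = 0 := by rw [hιw 0, Finset.range_zero, Finset.sum_empty]
  have hgw : ∀ n, g n ≫ (∑ k ∈ Finset.range (n + 1), ti (n + 1) ≫ t k ≫ Sigma.ι Fm k)
      = (∑ k ∈ Finset.range n, ti n ≫ t k ≫ Sigma.ι Fm k) + Sigma.ι Fm n := by
    intro n
    rw [Preadditive.comp_sum]
    have hterm : ∀ k, g n ≫ ti (n + 1) ≫ t k ≫ Sigma.ι Fm k
        = ti n ≫ t k ≫ Sigma.ι Fm k := by
      intro k
      rw [← Category.assoc, hginv n]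
    simp only [hterm]
    rw [Finset.sum_range_succ]
    congr 1
    rw [← Category.assoc, htit _, Category.id_comp]
  have h1sw : (𝟙 (∐ Fm) - s) ≫ w = -𝟙 (∐ Fm) := by
    apply Sigma.hom_ext
    intro n
    rw [Preadditive.comp_neg, Category.comp_id, ← Category.assoc, hι1s n,
      Preadditive.sub_comp, hιw n, Category.assoc, hιw (n + 1), hgw n]
    abel
  have hw1s : w ≫ (𝟙 (∐ Fm) - s) = u ≫ Sigma.ι Fm 0 - 𝟙 (∐ Fm) := by
    apply Sigma.hom_ext
    intro n
    conv_lhs => rw [← Category.assoc, hιw n, Preadditive.sum_comp]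
    conv_rhs => rw [Preadditive.comp_sub, Category.comp_id, ← Category.assoc, hιu n]
    have hterm : ∀ k, (ti n ≫ t k ≫ Sigma.ι Fm k) ≫ (𝟙 (∐ Fm) - s)
        = ti n ≫ t k ≫ Sigma.ι Fm k - ti n ≫ t (k + 1) ≫ Sigma.ι Fm (k + 1) := by
      intro k
      rw [Preadditive.comp_sub, Category.comp_id]
      congr 1
      rw [Category.assoc, Category.assoc, hιs k, ← Category.assoc (t k), ← Category.assoc]
    simp only [hterm]
    rw [Finset.sum_sub_distrib]
    have htel : ∑ k ∈ Finset.range n, ti n ≫ t (k + 1) ≫ Sigma.ι Fm (k + 1)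
        = (∑ k ∈ Finset.range n, ti n ≫ t k ≫ Sigma.ι Fm k)
          + (ti n ≫ t n ≫ Sigma.ι Fm n) - (ti n ≫ t 0 ≫ Sigma.ι Fm 0) := by
      rw [← Finset.sum_range_succ]
      rw [Finset.sum_range_succ' (fun k => ti n ≫ t k ≫ Sigma.ι Fm k) n]
      abel
    rw [htel]
    have h1 : ti n ≫ t n ≫ Sigma.ι Fm n = Sigma.ι Fm n := by
      rw [← Category.assoc, htit _, Category.id_comp]
    have h2 : ti n ≫ t 0 ≫ Sigma.ι Fm 0 = ti n ≫ Sigma.ι Fm 0 := by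
      congr 1
      exact Category.id_comp _
    rw [h1, h2]
    abel
  -- `∐ Fm ≅ (∐ Fm) ⊞ Fm 0` via `α`
  let α : ((∐ Fm) ⊞ Fm 0) ⟶ (∐ Fm) := biprod.desc (𝟙 (∐ Fm) - s) (Sigma.ι Fm 0)
  let β : (∐ Fm) ⟶ ((∐ Fm) ⊞ Fm 0) := biprod.lift (-w) u
  have hαβ : α ≫ β = 𝟙 _ := by
    apply biprod.hom_ext'
    · rw [← Category.assoc]
      have : biprod.inl ≫ α = 𝟙 (∐ Fm) - s := biprod.inl_desc _ _
      rw [this, Category.comp_id]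
      apply biprod.hom_ext
      · rw [Category.assoc, biprod.lift_fst, Preadditive.comp_neg, h1sw, biprod.inl_fst]
        abel
      · rw [Category.assoc, biprod.lift_snd, hsu, biprod.inl_snd]
    · rw [← Category.assoc]
      have : biprod.inr ≫ α = Sigma.ι Fm 0 := biprod.inr_desc _ _
      rw [this, Category.comp_id]
      apply biprod.hom_ext
      · rw [Category.assoc, biprod.lift_fst, Preadditive.comp_neg, hι0w, biprod.inr_fst,
          neg_zero]
      · rw [Category.assoc, biprod.lift_snd, hι0u, biprod.inr_snd]
  have hβα : β ≫ α = 𝟙 _ := by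
    rw [show β ≫ α = (-w) ≫ (𝟙 (∐ Fm) - s) + u ≫ Sigma.ι Fm 0 from biprod.lift_desc,
      Preadditive.neg_comp, hw1s]
    abel
  have hαiso : IsIso α := ⟨β, hαβ, hβα⟩
  -- the triangle `∐ Fm ⟶ ∐ Fm ⟶ Fm 0 ⟶ (∐ Fm)⟦1⟧` is distinguished
  have hT'' : Triangle.mk (𝟙 (∐ Fm) - s) u (0 : Fm 0 ⟶ (∐ Fm)⟦(1 : ℤ)⟧) ∈ distTriang T := by
    refine isomorphic_distinguished _ (binaryBiproductTriangle_distinguished (∐ Fm) (Fm 0)) _ ?_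
    refine Iso.symm (Triangle.isoMk _ _ (Iso.refl _) (@asIso _ _ _ _ α hαiso) (Iso.refl _) ?_ ?_ ?_)
    · dsimp [binaryBiproductTriangle]
      show biprod.inl ≫ α = 𝟙 (∐ Fm) ≫ (𝟙 (∐ Fm) - s)
      rw [Category.id_comp]
      exact biprod.inl_desc _ _
    · dsimp [binaryBiproductTriangle]
      show biprod.snd ≫ 𝟙 (Fm 0) = α ≫ u
      rw [Category.comp_id]
      apply biprod.hom_ext'
      · rw [← Category.assoc, biprod.inl_desc, hsu, biprod.inl_snd]
      · rw [← Category.assoc, biprod.inr_desc, hι0u, biprod.inr_snd]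
    · dsimp [binaryBiproductTriangle]
      exact zero_comp.trans comp_zero.symm
  -- complete the identity to a morphism of triangles; its third component is an iso
  obtain ⟨c, hc₁, hc₂⟩ : ∃ c : Fm 0 ⟶ H, u ≫ c = 𝟙 (∐ Fm) ≫ π ∧
      (0 : Fm 0 ⟶ (∐ Fm)⟦(1 : ℤ)⟧) ≫ (𝟙 (∐ Fm))⟦(1 : ℤ)⟧' = c ≫ δ :=
    complete_distinguished_triangle_morphism
    (Triangle.mk (𝟙 (∐ Fm) - s) u (0 : Fm 0 ⟶ (∐ Fm)⟦(1 : ℤ)⟧))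
    (Triangle.mk (𝟙 (∐ Fm) - Sigma.desc (fun n => g n ≫ Sigma.ι Fm (n + 1))) π δ)
    hT'' hH (𝟙 _) (𝟙 _) (by exact (Category.comp_id _).trans (Category.id_comp _).symm)
  change u ≫ c = 𝟙 (∐ Fm) ≫ π at hc₁
  rw [Category.id_comp] at hc₁
  let φ : Triangle.mk (𝟙 (∐ Fm) - s) u (0 : Fm 0 ⟶ (∐ Fm)⟦(1 : ℤ)⟧) ⟶
      Triangle.mk (𝟙 (∐ Fm) - Sigma.desc (fun n => g n ≫ Sigma.ι Fm (n + 1))) π δ :=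
    { hom₁ := 𝟙 _
      hom₂ := 𝟙 _
      hom₃ := c
      comm₁ := by exact (Category.comp_id _).trans (Category.id_comp _).symm
      comm₂ := by exact hc₁.trans (Category.id_comp _).symm
      comm₃ := by exact hc₂ }
  have hciso : IsIso c := by
    have : IsIso φ.hom₃ := isIso₃_of_isIso₁₂ φ hT'' hH
      (by dsimp [φ]; exact IsIso.id _) (by dsimp [φ]; exact IsIso.id _)
    exact this
  -- conclude: `e 0 = c ≫ h`
  have hι0π : Sigma.ι Fm 0 ≫ π = c := by
    rw [← hc₁, ← Category.assoc, hι0u, Category.id_comp]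
  have he0 : e 0 = c ≫ h := by
    rw [← hfac 0, ← Category.assoc, hι0π]
  rw [he0]
  exact @IsIso.comp_isIso _ _ _ _ _ c h hciso hiso
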